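/- Let M and N be von Neumann algebras and Δ : S(M⁺) → S(N⁺) a surjective isometry that maps nonzero projections to nonzero projections bijectively. Then Δ(1) = 1, i.e., Δ maps the unit of M to the unit of N. -/

import Mathlib

private lemma aux_smul_nonneg {K : Type*} [NormedAddCommGroup K] [InnerProductSpace ℂ K]
    [CompleteSpace K] {a : K →L[ℂ] K} (ha : 0 ≤ a) {r : ℝ} (hr : 0 ≤ r) : 0 ≤ r • a := by
  have h := star_left_conjugate_nonneg ha ((Real.sqrt r) • (1 : K →L[ℂ] K))
  have hs : star ((Real.sqrt r) • (1 : K →L[ℂ] K)) = (Real.sqrt r) • 1 := by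
    simp [star_smul]
  rw [hs, smul_mul_assoc, mul_smul_comm, one_mul, mul_one, smul_smul,
    Real.mul_self_sqrt hr] at h
  exact h

private lemma aux_alg_mono {K : Type*} [NormedAddCommGroup K] [InnerProductSpace ℂ K]
    [CompleteSpace K] {s t : ℝ} (h : s ≤ t) :
    algebraMap ℝ (K →L[ℂ] K) s ≤ algebraMap ℝ (K →L[ℂ] K) t := by
  rw [← sub_nonneg, ← map_sub, Algebra.algebraMap_eq_smul_one]
  have h1 : (0 : K →L[ℂ] K) ≤ 1 := by
    simpa using star_mul_self_nonneg (1 : K →L[ℂ] K)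
  exact aux_smul_nonneg h1 (sub_nonneg.mpr h)

set_option maxHeartbeats 1000000 in
/-- A surjective isometry between the sets of positive norm-one elements of two
von Neumann algebras that maps the nonzero projections bijectively onto the nonzero
projections sends the unit to the unit. -/
theorem delta_one_eq_one {H K : Type*} [NormedAddCommGroup H] [InnerProductSpace ℂ H]
    [CompleteSpace H] [NormedAddCommGroup K] [InnerProductSpace ℂ K] [CompleteSpace K]
    (M : VonNeumannAlgebra H) (N : VonNeumannAlgebra K)
    (Δ : (H →L[ℂ] H) → (K →L[ℂ] K))
    (hbij : Set.BijOn Δ {x | x ∈ M ∧ 0 ≤ x ∧ ‖x‖ = 1} {y | y ∈ N ∧ 0 ≤ y ∧ ‖y‖ = 1})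
    (hiso : ∀ x ∈ {x | x ∈ M ∧ 0 ≤ x ∧ ‖x‖ = 1}, ∀ y ∈ {x | x ∈ M ∧ 0 ≤ x ∧ ‖x‖ = 1},
      ‖Δ x - Δ y‖ = ‖x - y‖)
    (hproj : Δ '' {p | p ∈ M ∧ IsIdempotentElem p ∧ IsSelfAdjoint p ∧ p ≠ 0} =
      {q | q ∈ N ∧ IsIdempotentElem q ∧ IsSelfAdjoint q ∧ q ≠ 0}) :
    Δ 1 = 1 := by
  obtain hK | hK := subsingleton_or_nontrivial (K →L[ℂ] K)
  · exact Subsingleton.elim _ _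
  -- the unit of N is a nonzero projection
  have h1N0 : (1 : K →L[ℂ] K) ≠ 0 := one_ne_zero
  have h1Nmem : (1 : K →L[ℂ] K) ∈
      {q : K →L[ℂ] K | q ∈ N ∧ IsIdempotentElem q ∧ IsSelfAdjoint q ∧ q ≠ 0} :=
    ⟨one_mem N, IsIdempotentElem.one, (IsSelfAdjoint.one _), h1N0⟩
  rw [← hproj] at h1Nmem
  obtain ⟨p₀, hp₀, -⟩ := h1Nmem
  -- H is nontrivial
  have hH : Nontrivial H := by
    rcases subsingleton_or_nontrivial H with hs | hn
    · exact absurd (ContinuousLinearMap.ext fun v => Subsingleton.elim _ _) hp₀.2.2.2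
    · exact hn
  have h1H0 : (1 : H →L[ℂ] H) ≠ 0 := by
    obtain ⟨v, hv⟩ := exists_ne (0 : H)
    intro h
    exact hv (by simpa using congrArg (fun T : H →L[ℂ] H => T v) h)
  have ho1M : (0 : H →L[ℂ] H) ≤ 1 := by
    simpa using star_mul_self_nonneg (1 : H →L[ℂ] H)
  have hnorm1M : ‖(1 : H →L[ℂ] H)‖ = 1 := by
    rw [ContinuousLinearMap.one_def]; exact ContinuousLinearMap.norm_id
  have h1S : (1 : H →L[ℂ] H) ∈ {x : H →L[ℂ] H | x ∈ M ∧ 0 ≤ x ∧ ‖x‖ = 1} :=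
    ⟨one_mem M, ho1M, hnorm1M⟩
  -- q := Δ 1 is a nonzero projection in N
  have hqmem : Δ 1 ∈ {q : K →L[ℂ] K | q ∈ N ∧ IsIdempotentElem q ∧ IsSelfAdjoint q ∧ q ≠ 0} := by
    rw [← hproj]
    exact ⟨1, ⟨one_mem M, IsIdempotentElem.one, (IsSelfAdjoint.one _), h1H0⟩, rfl⟩
  obtain ⟨hqN, hqi, hqs, hqne⟩ := hqmem
  set q : K →L[ℂ] K := Δ 1 with hq_def
  by_contra hΔ1
  -- q' := 1 - q is a nonzero projection, so it lies in S(N⁺)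
  set q' : K →L[ℂ] K := 1 - q with hq'_def
  have hq'ne : q' ≠ 0 := sub_ne_zero.mpr (Ne.symm hΔ1)
  have hq's : IsSelfAdjoint q' := ((IsSelfAdjoint.one _)).sub hqs
  have hq'i : q' * q' = q' := by
    have h : (1 - q) * (1 - q) = 1 - q - q + q * q := by noncomm_ring
    rw [hq'_def, h, hqi]
    abel
  have hq'0 : (0 : K →L[ℂ] K) ≤ q' := by
    have := star_mul_self_nonneg q'
    rwa [hq's.star_eq, hq'i] at this
  have hq'norm : ‖q'‖ = 1 := by
    have h := CStarRing.norm_star_mul_self (x := q')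
    rw [hq's.star_eq, hq'i] at h
    have hne : ‖q'‖ ≠ 0 := norm_ne_zero_iff.mpr hq'ne
    field_simp at h
    exact h.symm
  have hq'S : q' ∈ {y : K →L[ℂ] K | y ∈ N ∧ 0 ≤ y ∧ ‖y‖ = 1} :=
    ⟨sub_mem (one_mem N) hqN, hq'0, hq'norm⟩
  -- pull back q' to x ∈ S(M⁺)
  obtain ⟨x, hxS, hΔx⟩ := hbij.2.2 hq'S
  obtain ⟨hxM, hx0, hxnorm⟩ := hxS
  have hxs : IsSelfAdjoint x := IsSelfAdjoint.of_nonneg hx0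
  have hx1 : x ≤ 1 := by
    have h := hxs.le_algebraMap_norm_self
    rwa [hxnorm, map_one] at h
  have h1x0 : (0 : H →L[ℂ] H) ≤ 1 - x := sub_nonneg.mpr hx1
  have h1xnorm : ‖(1 : H →L[ℂ] H) - x‖ ≤ 1 := by
    calc ‖(1 : H →L[ℂ] H) - x‖ ≤ ‖(1 : H →L[ℂ] H)‖ :=
          CStarAlgebra.norm_le_norm_of_nonneg_of_le h1x0 (sub_le_self _ hx0)
      _ = 1 := hnorm1M
  -- the midpoint w of 1 and x lies in S(M⁺)
  set w : H →L[ℂ] H := (2 : ℝ)⁻¹ • (1 + x) with hw_def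
  have hwM : w ∈ M := by
    have hmem : (1 + x : H →L[ℂ] H) ∈ M.toStarSubalgebra :=
      add_mem (one_mem _) hxM
    have h := M.toStarSubalgebra.smul_mem hmem ((2 : ℂ)⁻¹)
    have hsc : ((2 : ℂ)⁻¹ • (1 + x) : H →L[ℂ] H) = w := by
      rw [hw_def, ← algebraMap_smul ℂ ((2 : ℝ)⁻¹) ((1 + x) : H →L[ℂ] H)]
      norm_num
    rwa [hsc] at h
  have hw0 : (0 : H →L[ℂ] H) ≤ w :=
    aux_smul_nonneg (add_nonneg ho1M hx0) (by norm_num)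
  have hxw : x ≤ w := by
    have hwx : w - x = (2 : ℝ)⁻¹ • (1 - x) := by rw [hw_def]; module
    have : (0 : H →L[ℂ] H) ≤ w - x := by
      rw [hwx]; exact aux_smul_nonneg h1x0 (by norm_num)
    exact sub_nonneg.mp this
  have hwnorm : ‖w‖ = 1 := by
    apply le_antisymm
    · calc ‖w‖ = (2 : ℝ)⁻¹ * ‖(1 : H →L[ℂ] H) + x‖ := by
            rw [hw_def, norm_smul]; norm_num
      _ ≤ (2 : ℝ)⁻¹ * (‖(1 : H →L[ℂ] H)‖ + ‖x‖) := by
            have := norm_add_le (1 : H →L[ℂ] H) x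
            nlinarith
      _ = 1 := by rw [hnorm1M, hxnorm]; norm_num
    · calc (1 : ℝ) = ‖x‖ := hxnorm.symm
        _ ≤ ‖w‖ := CStarAlgebra.norm_le_norm_of_nonneg_of_le hx0 hxw
  have hwS : w ∈ {x : H →L[ℂ] H | x ∈ M ∧ 0 ≤ x ∧ ‖x‖ = 1} := ⟨hwM, hw0, hwnorm⟩
  -- m := Δ w is within 1/2 of both q and q'
  set m : K →L[ℂ] K := Δ w with hm_def
  obtain ⟨hmN, hm0, hmnorm⟩ := hbij.1 hwS
  have hms : IsSelfAdjoint m := IsSelfAdjoint.of_nonneg hm0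
  have ha : ‖m - q‖ ≤ 2⁻¹ := by
    rw [hm_def, hq_def, hiso w hwS 1 h1S]
    have hw1 : w - 1 = (2 : ℝ)⁻¹ • (x - 1) := by rw [hw_def]; module
    rw [hw1, norm_smul, norm_sub_rev]
    norm_num
    linarith [h1xnorm]
  have hb : ‖m - q'‖ ≤ 2⁻¹ := by
    rw [hm_def, ← hΔx, hiso w hwS x ⟨hxM, hx0, hxnorm⟩]
    have hwx : w - x = (2 : ℝ)⁻¹ • (1 - x) := by rw [hw_def]; module
    rw [hwx, norm_smul]
    norm_num
    linarith [h1xnorm]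
  -- squares are small
  have sq_small : ∀ c : K →L[ℂ] K, IsSelfAdjoint c → ‖c‖ ≤ 2⁻¹ →
      c * c ≤ algebraMap ℝ (K →L[ℂ] K) 4⁻¹ := by
    intro c hcs hcn
    have hsa2 : IsSelfAdjoint (c * c) := by
      rw [IsSelfAdjoint, star_mul, hcs.star_eq]
    have h1 := hsa2.le_algebraMap_norm_self
    have h2 : ‖c * c‖ ≤ 4⁻¹ := by
      have := CStarRing.norm_star_mul_self (x := c)
      rw [hcs.star_eq] at this
      rw [this]
      nlinarith [norm_nonneg c]
    exact h1.trans (aux_alg_mono h2)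
  have haa := sq_small (m - q) (hms.sub hqs) ha
  have hbb := sq_small (m - q') (hms.sub hq's) hb
  -- parallelogram identity
  have hkey : (m + m - 1) * (m + m - 1) =
      (m - q) * (m - q) + (m - q) * (m - q) +
      ((m - q') * (m - q') + (m - q') * (m - q')) - 1 := by
    have expand : (m - q) * (m - q) + (m - q) * (m - q) +
        ((m - (1 - q)) * (m - (1 - q)) + (m - (1 - q)) * (m - (1 - q))) - 1 =
        (m + m - 1) * (m + m - 1) + ((q * q - q) + (q * q - q) + (q * q - q) + (q * q - q)) := by
      noncomm_ring
    rw [hq'_def, expand, hqi]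
    simp
  have hle : (m + m - 1) * (m + m - 1) ≤ 0 := by
    rw [hkey]
    have hsum : (m - q) * (m - q) + (m - q) * (m - q) +
        ((m - q') * (m - q') + (m - q') * (m - q')) - 1 ≤
        algebraMap ℝ (K →L[ℂ] K) 4⁻¹ + algebraMap ℝ (K →L[ℂ] K) 4⁻¹ +
        (algebraMap ℝ (K →L[ℂ] K) 4⁻¹ + algebraMap ℝ (K →L[ℂ] K) 4⁻¹) - 1 :=
      sub_le_sub_right (add_le_add (add_le_add haa haa) (add_le_add hbb hbb)) 1
    have hsum2 : algebraMap ℝ (K →L[ℂ] K) 4⁻¹ + algebraMap ℝ (K →L[ℂ] K) 4⁻¹ +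
        (algebraMap ℝ (K →L[ℂ] K) 4⁻¹ + algebraMap ℝ (K →L[ℂ] K) 4⁻¹) - 1 = 0 := by
      simp only [Algebra.algebraMap_eq_smul_one]
      module
    rw [hsum2] at hsum
    exact hsum
  have hss : IsSelfAdjoint (m + m - 1) := (hms.add hms).sub ((IsSelfAdjoint.one _))
  have hge : (0 : K →L[ℂ] K) ≤ (m + m - 1) * (m + m - 1) := by
    have := star_mul_self_nonneg (m + m - 1)
    rwa [hss.star_eq] at this
  have heq : (m + m - 1) * (m + m - 1) = 0 := le_antisymm hle hge
  have hs0 : m + m - 1 = 0 := by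
    have h := CStarRing.norm_star_mul_self (x := m + m - 1)
    rw [hss.star_eq, heq, norm_zero] at h
    have : ‖m + m - 1‖ = 0 := by nlinarith [norm_nonneg (m + m - 1)]
    exact norm_eq_zero.mp this
  have hmm1 : m + m = 1 := by
    have := sub_eq_zero.mp hs0
    exact this
  have h2 : ‖m + m‖ = 2 := by
    have hmm : m + m = (2 : ℝ) • m := (two_smul ℝ m).symm
    rw [hmm, norm_smul, hmnorm]
    norm_num
  have hle1 : ‖m + m‖ ≤ 1 := by
    rw [hmm1, ContinuousLinearMap.one_def]
    exact ContinuousLinearMap.norm_id_le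
  rw [h2] at hle1
  linarith
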